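/- In the discrete strip setup with μ = 0 (cylindrical case), assume s₁·s₂·s₃ ≠ 0, t₁·t₂·t₃ ≠ 0, (s₁² − 1)·(t₁² − 1) ≠ 0, and that R₂ = 0 and R₃ = 0, where Rᵢ := s₁²sᵢt₁tᵢ² − s₁sᵢ²t₁²tᵢ − s₁²sᵢt₁ + s₁sᵢ²tᵢ + s₁t₁²tᵢ − sᵢt₁tᵢ² − s₁tᵢ + sᵢt₁ for i ∈ {2, 3}. Then for all δ₁, δ₂ ∈ ℝ, D₁(δ₁, δ₂) = 0 implies D₂(δ₁, δ₂) = 0. -/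

import Mathlib

open Real Matrix



noncomputable section

/-- Rotation matrix about the `x`-axis by angle `δ`. -/
def rotX (δ : ℝ) : Matrix (Fin 3) (Fin 3) ℝ :=
  !![1, 0, 0;
     0, Real.cos δ, -Real.sin δ;
     0, Real.sin δ, Real.cos δ]

/-- Rotation matrix by angle `δ` about the line through the origin with direction
`(cos μ, sin μ, 0)`. -/
def rotAxis (μ δ : ℝ) : Matrix (Fin 3) (Fin 3) ℝ :=
  !![(1 - Real.cos μ ^ 2) * Real.cos δ + Real.cos μ ^ 2,
       Real.cos μ * Real.sin μ * (1 - Real.cos δ),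
       Real.sin μ * Real.sin δ;
     Real.cos μ * Real.sin μ * (1 - Real.cos δ),
       (1 - Real.sin μ ^ 2) * Real.cos δ + Real.sin μ ^ 2,
       -(Real.cos μ * Real.sin δ);
     -(Real.sin μ * Real.sin δ),
       Real.cos μ * Real.sin δ,
       Real.cos δ]

/-- The unit vector `(cos θ, sin θ, 0)` in the `xy`-plane. -/
def dirVec (θ : ℝ) : Fin 3 → ℝ := ![Real.cos θ, Real.sin θ, 0]

/-- Coplanarity determinant of the three cut edge directions `R₁·(cos θ₁, sin θ₁, 0)`,
`(cos θ₂, sin θ₂, 0)`, `R₂·(cos (μ+θ₃), sin (μ+θ₃), 0)`. -/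
def Ddet (μ δ₁ δ₂ θ₁ θ₂ θ₃ : ℝ) : ℝ :=
  Matrix.det (Matrix.of
    ![(rotX δ₁).mulVec (dirVec θ₁),
      dirVec θ₂,
      (rotAxis μ δ₂).mulVec (dirVec (μ + θ₃))])


/-- In the cylindrical case `μ = 0`: if `R₂ = 0` and `R₃ = 0` (and the
stated nondegeneracy assumptions hold), then every folding with coplanar first cut polygon
also keeps the second cut polygon coplanar: `D₁ = 0` implies `D₂ = 0`. -/
lemma Ddet_zero_formula (δ₁ δ₂ θ₁ θ₂ θ₃ : ℝ) :
    Ddet 0 δ₁ δ₂ θ₁ θ₂ θ₃ =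
      Real.sin δ₂ * Real.sin θ₃ * (Real.cos θ₁ * Real.sin θ₂ -
        Real.cos θ₂ * Real.sin θ₁ * Real.cos δ₁) +
      Real.sin θ₁ * Real.sin δ₁ * (Real.cos θ₂ * Real.sin θ₃ * Real.cos δ₂ -
        Real.cos θ₃ * Real.sin θ₂) := by
  simp [Ddet, rotX, rotAxis, dirVec, Matrix.det_fin_three, Matrix.mulVec,
    dotProduct, Fin.sum_univ_three]
  ring

lemma half_formulas (θ s : ℝ) (hs : s = Real.tan (θ / 2)) (hs0 : s ≠ 0) :
    Real.sin θ = 2 * s / (1 + s ^ 2) ∧ Real.cos θ = (1 - s ^ 2) / (1 + s ^ 2) := by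
  have hc : Real.cos (θ / 2) ≠ 0 := by
    intro h
    apply hs0
    rw [hs, Real.tan_eq_sin_div_cos, h, div_zero]
  have hsq : Real.sin (θ / 2) ^ 2 + Real.cos (θ / 2) ^ 2 = 1 := Real.sin_sq_add_cos_sq _
  have hden : (1 : ℝ) + s ^ 2 ≠ 0 := by positivity
  have hsin : Real.sin θ = 2 * Real.sin (θ / 2) * Real.cos (θ / 2) := by
    rw [← Real.sin_two_mul]; ring_nf
  have hcos : Real.cos θ = 2 * Real.cos (θ / 2) ^ 2 - 1 := by
    rw [← Real.cos_two_mul]; ring_nf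
  rw [hs, Real.tan_eq_sin_div_cos]
  constructor
  · rw [hsin]
    field_simp
    nlinarith [hsq, congrArg (Real.sin (θ / 2) * ·) hsq]
  · rw [hcos]
    field_simp
    nlinarith [hsq]
set_option maxHeartbeats 1600000 in
theorem discrete_cylinder_sufficient_condition
    (σ₁ σ₂ σ₃ τ₁ τ₂ τ₃ s₁ s₂ s₃ t₁ t₂ t₃ : ℝ)
    (hs₁ : s₁ = Real.tan (σ₁ / 2)) (hs₂ : s₂ = Real.tan (σ₂ / 2))
    (hs₃ : s₃ = Real.tan (σ₃ / 2))
    (ht₁ : t₁ = Real.tan (τ₁ / 2)) (ht₂ : t₂ = Real.tan (τ₂ / 2))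
    (ht₃ : t₃ = Real.tan (τ₃ / 2))
    (hs0 : s₁ * s₂ * s₃ ≠ 0) (ht0 : t₁ * t₂ * t₃ ≠ 0)
    (h1 : (s₁ ^ 2 - 1) * (t₁ ^ 2 - 1) ≠ 0)
    (hR₂ : s₁ ^ 2 * s₂ * t₁ * t₂ ^ 2 - s₁ * s₂ ^ 2 * t₁ ^ 2 * t₂ - s₁ ^ 2 * s₂ * t₁ +
      s₁ * s₂ ^ 2 * t₂ + s₁ * t₁ ^ 2 * t₂ - s₂ * t₁ * t₂ ^ 2 - s₁ * t₂ + s₂ * t₁ = 0)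
    (hR₃ : s₁ ^ 2 * s₃ * t₁ * t₃ ^ 2 - s₁ * s₃ ^ 2 * t₁ ^ 2 * t₃ - s₁ ^ 2 * s₃ * t₁ +
      s₁ * s₃ ^ 2 * t₃ + s₁ * t₁ ^ 2 * t₃ - s₃ * t₁ * t₃ ^ 2 - s₁ * t₃ + s₃ * t₁ = 0) :
    ∀ δ₁ δ₂ : ℝ, Ddet 0 δ₁ δ₂ σ₁ σ₂ σ₃ = 0 → Ddet 0 δ₁ δ₂ τ₁ τ₂ τ₃ = 0 := by
  -- nonzeroness
  have hs₁0 : s₁ ≠ 0 := fun h => hs0 (by simp [h])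
  have hs₂0 : s₂ ≠ 0 := fun h => hs0 (by simp [h])
  have hs₃0 : s₃ ≠ 0 := fun h => hs0 (by simp [h])
  have ht₁0 : t₁ ≠ 0 := fun h => ht0 (by simp [h])
  have ht₂0 : t₂ ≠ 0 := fun h => ht0 (by simp [h])
  have ht₃0 : t₃ ≠ 0 := fun h => ht0 (by simp [h])
  have hs₁1 : 1 - s₁ ^ 2 ≠ 0 := fun h => h1 (by nlinarith)
  have ht₁1 : 1 - t₁ ^ 2 ≠ 0 := fun h => h1 (by nlinarith)
  obtain ⟨hS1, hC1⟩ := half_formulas σ₁ s₁ hs₁ hs₁0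
  obtain ⟨hS2, hC2⟩ := half_formulas σ₂ s₂ hs₂ hs₂0
  obtain ⟨hS3, hC3⟩ := half_formulas σ₃ s₃ hs₃ hs₃0
  obtain ⟨hT1, hD1'⟩ := half_formulas τ₁ t₁ ht₁ ht₁0
  obtain ⟨hT2, hD2'⟩ := half_formulas τ₂ t₂ ht₂ ht₂0
  obtain ⟨hT3, hD3'⟩ := half_formulas τ₃ t₃ ht₃ ht₃0
  have hds1 : (1 : ℝ) + s₁ ^ 2 ≠ 0 := by positivity
  have hds2 : (1 : ℝ) + s₂ ^ 2 ≠ 0 := by positivity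
  have hds3 : (1 : ℝ) + s₃ ^ 2 ≠ 0 := by positivity
  have hdt1 : (1 : ℝ) + t₁ ^ 2 ≠ 0 := by positivity
  have hdt2 : (1 : ℝ) + t₂ ^ 2 ≠ 0 := by positivity
  have hdt3 : (1 : ℝ) + t₃ ^ 2 ≠ 0 := by positivity
  intro δ₁ δ₂ hDD
  set u := Real.sin δ₁ with hu
  set x := Real.cos δ₁ with hx
  set v := Real.sin δ₂ with hv
  set y := Real.cos δ₂ with hy
  have factσ : Ddet 0 δ₁ δ₂ σ₁ σ₂ σ₃ =
      4 / ((1 + s₁ ^ 2) * (1 + s₂ ^ 2) * (1 + s₃ ^ 2)) *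
        (s₂ * s₃ * (1 - s₁ ^ 2) * v - s₁ * s₃ * (1 - s₂ ^ 2) * (v * x - u * y) -
          s₁ * s₂ * (1 - s₃ ^ 2) * u) := by
    rw [Ddet_zero_formula, hS1, hC1, hS2, hC2, hS3, hC3]
    field_simp
    ring
  have factτ : Ddet 0 δ₁ δ₂ τ₁ τ₂ τ₃ =
      4 / ((1 + t₁ ^ 2) * (1 + t₂ ^ 2) * (1 + t₃ ^ 2)) *
        (t₂ * t₃ * (1 - t₁ ^ 2) * v - t₁ * t₃ * (1 - t₂ ^ 2) * (v * x - u * y) -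
          t₁ * t₂ * (1 - t₃ ^ 2) * u) := by
    rw [Ddet_zero_formula, hT1, hD1', hT2, hD2', hT3, hD3']
    field_simp
    ring
  rw [factσ] at hDD
  have hc : (4 : ℝ) / ((1 + s₁ ^ 2) * (1 + s₂ ^ 2) * (1 + s₃ ^ 2)) ≠ 0 := by positivity
  have hEσ : s₂ * s₃ * (1 - s₁ ^ 2) * v - s₁ * s₃ * (1 - s₂ ^ 2) * (v * x - u * y) -
      s₁ * s₂ * (1 - s₃ ^ 2) * u = 0 := by
    rcases mul_eq_zero.mp hDD with h | h
    · exact absurd h hc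
    · exact h
  have hM : s₂ * s₃ * (1 - s₁ ^ 2) ≠ 0 := by
    exact mul_ne_zero (mul_ne_zero hs₂0 hs₃0) hs₁1
  have key : s₂ * s₃ * (1 - s₁ ^ 2) *
      (t₂ * t₃ * (1 - t₁ ^ 2) * v - t₁ * t₃ * (1 - t₂ ^ 2) * (v * x - u * y) -
        t₁ * t₂ * (1 - t₃ ^ 2) * u) = 0 := by
    linear_combination (t₂ * t₃ * (1 - t₁ ^ 2)) * hEσ -
      (s₃ * t₃ * (v * x - u * y)) * hR₂ - (s₂ * t₂ * u) * hR₃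
  rw [factτ, mul_eq_zero]
  right
  exact (mul_eq_zero.mp key).resolve_left hM

end
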